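/- Let f : ℤ^m → [0,∞) be a ℤ-norm: f(a+b) ≤ f(a)+f(b), f(na) = |n|·f(a) for n ∈ ℤ, and f(a) = 0 iff a = 0. Suppose f is discrete: there is c > 0 with f(a) ≥ c for all a ≠ 0. Then f extends to an ℝ-norm on ℝ^m, and consequently there exists k > 0 with f(n₁,...,n_m) ≥ k(|n₁| + ... + |n_m|) for all (n₁,...,n_m) ∈ ℤ^m. -/

import Mathlib

open Filter Topology Finset
set_option linter.unusedSectionVars false
set_option linter.unusedVariables false
set_option linter.unusedTactic false

namespace DZN

variable {m : ℕ} (f : (Fin m → ℤ) → ℝ)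

/-- The ℓ¹ Lipschitz-type constant. -/
noncomputable def C : ℝ := ∑ i : Fin m, f (Pi.single i 1)

/-- floor sequence -/
noncomputable def u (x : Fin m → ℝ) (n : ℕ) : ℝ := f (fun i => ⌊(n : ℝ) * x i⌋)

/-- the extension -/
noncomputable def N (x : Fin m → ℝ) : ℝ :=
  sInf ((fun n : ℕ => (u f x n + C f) / n) '' Set.Ici 1)

lemma floor_diff_abs (s t : ℝ) : |(⌊s⌋ : ℝ) - (⌊t⌋ : ℝ)| ≤ |s - t| + 1 := by
  have h1 := Int.floor_le s
  have h2 := Int.lt_floor_add_one s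
  have h3 := Int.floor_le t
  have h4 := Int.lt_floor_add_one t
  rw [abs_le]
  constructor <;> cases abs_cases (s - t) <;> linarith

section hyps

variable (hpos : ∀ a, 0 ≤ f a)
    (hsub : ∀ a b, f (a + b) ≤ f a + f b)
    (hhom : ∀ (n : ℤ) (a), f (n • a) = |(n : ℝ)| * f a)

include hhom

lemma f0 : f 0 = 0 := by
  have := hhom 0 0
  simpa using this

lemma fneg (a : Fin m → ℤ) : f (-a) = f a := by
  have := hhom (-1) a
  simpa using this

include hpos hsub

lemma C_nonneg : 0 ≤ C f := Finset.sum_nonneg fun i _ => hpos _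

lemma single_le_C (i : Fin m) : f (Pi.single i 1) ≤ C f :=
  Finset.single_le_sum (f := fun j => f (Pi.single j 1)) (fun j _ => hpos _) (Finset.mem_univ i)

lemma f_le_sum (a : Fin m → ℤ) : f a ≤ ∑ i, |(a i : ℝ)| * f (Pi.single i 1) := by
  have h1 : a = ∑ i, Pi.single i (a i) := (Finset.univ_sum_single a).symm
  calc f a = f (∑ i, Pi.single i (a i)) := by rw [← h1]
    _ ≤ ∑ i, f (Pi.single i (a i)) :=
        Finset.le_sum_of_subadditive f (f0 f hhom).le hsub _ _
    _ = ∑ i, |(a i : ℝ)| * f (Pi.single i 1) := by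
        refine Finset.sum_congr rfl fun i _ => ?_
        have : Pi.single i (a i) = (a i) • (Pi.single i 1 : Fin m → ℤ) := by
          funext j
          simp [Pi.single_apply, mul_ite]
        rw [this, hhom]

lemma f_le_C_mul (a : Fin m → ℤ) : f a ≤ C f * ∑ i, |(a i : ℝ)| := by
  refine (f_le_sum f hpos hsub hhom a).trans ?_
  rw [Finset.mul_sum]
  refine Finset.sum_le_sum fun i _ => ?_
  rw [mul_comm (C f)]
  exact mul_le_mul_of_nonneg_left (single_le_C f hpos hsub hhom i) (abs_nonneg _)

lemma f_lipschitz (a b : Fin m → ℤ) : f a ≤ f b + C f * ∑ i, |(a i : ℝ) - (b i : ℝ)| := by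
  have h1 : a = b + (a - b) := by ring
  calc f a = f (b + (a - b)) := by rw [← h1]
    _ ≤ f b + f (a - b) := hsub _ _
    _ ≤ f b + C f * ∑ i, |(a i : ℝ) - (b i : ℝ)| := by
        refine add_le_add le_rfl ((f_le_C_mul f hpos hsub hhom _).trans_eq ?_)
        congr 1
        refine Finset.sum_congr rfl fun i _ => ?_
        push_cast [Pi.sub_apply]
        ring_nf

/-- f of a vector with entries of absolute value ≤ 1 is at most C. -/
lemma f_small (d : Fin m → ℤ) (hd : ∀ i, |d i| ≤ 1) : f d ≤ C f := by
  refine (f_le_sum f hpos hsub hhom d).trans ?_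
  refine Finset.sum_le_sum fun i _ => ?_
  have h1 : |(d i : ℝ)| ≤ 1 := by exact_mod_cast hd i
  nlinarith [hpos (Pi.single i (1:ℤ)), single_le_C f hpos hsub hhom i,
    abs_nonneg ((d i : ℝ))]


lemma u_subadd (x : Fin m → ℝ) : Subadditive (fun n => u f x n + C f) := by
  intro p q
  have key : u f x (p + q) ≤ u f x p + u f x q + C f := by
    set A : Fin m → ℤ := fun i => ⌊(p : ℝ) * x i⌋ with hA
    set B : Fin m → ℤ := fun i => ⌊(q : ℝ) * x i⌋ with hB
    set E : Fin m → ℤ := fun i => ⌊((p + q : ℕ) : ℝ) * x i⌋ with hE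
    have hDle : ∀ i, |E i - A i - B i| ≤ 1 := by
      intro i
      have h1 : A i + B i ≤ E i := by
        rw [hA, hB, hE]
        simp only [Int.le_floor]
        push_cast
        have := Int.floor_le ((p : ℝ) * x i)
        have := Int.floor_le ((q : ℝ) * x i)
        rw [add_mul]
        push_cast
        linarith
      have h2 : E i ≤ A i + B i + 1 := by
        have h3 : E i < A i + B i + 2 := by
          rw [hA, hB, hE]
          simp only [Int.floor_lt]
          push_cast
          have := Int.lt_floor_add_one ((p : ℝ) * x i)
          have := Int.lt_floor_add_one ((q : ℝ) * x i)
          rw [add_mul]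
          push_cast
          linarith
        omega
      rw [abs_le]; omega
    have hsplit : (fun i => E i) = A + (B + (fun i => E i - A i - B i)) := by
      funext i
      simp only [Pi.add_apply]
      ring
    calc u f x (p + q) = f (A + (B + (fun i => E i - A i - B i))) := by
          rw [u, ← hsplit]
      _ ≤ f A + (f B + f (fun i => E i - A i - B i)) :=
          le_trans (hsub _ _) (add_le_add le_rfl (hsub _ _))
      _ ≤ u f x p + u f x q + C f := by
          have := f_small f hpos hsub hhom (fun i => E i - A i - B i) hDle
          rw [u, u]; linarith
  show u f x (p + q) + C f ≤ (u f x p + C f) + (u f x q + C f)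
  linarith

lemma u_nonneg (x : Fin m → ℝ) (n : ℕ) : 0 ≤ u f x n := hpos _

lemma u_bdd (x : Fin m → ℝ) :
    BddBelow (Set.range fun n : ℕ => (u f x n + C f) / n) := by
  refine ⟨0, fun y hy => ?_⟩
  obtain ⟨n, rfl⟩ := hy
  have h1 := u_nonneg f hpos hsub hhom x n
  have h2 := C_nonneg f hpos hsub hhom
  positivity

/-- The master convergence lemma. -/
lemma tendsto_N (x : Fin m → ℝ) :
    Tendsto (fun n : ℕ => u f x n / n) atTop (𝓝 (N f x)) := by
  have h := u_subadd f hpos hsub hhom x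
  have hb := u_bdd f hpos hsub hhom x
  have h1 : Tendsto (fun n : ℕ => (u f x n + C f) / n) atTop (𝓝 h.lim) :=
    h.tendsto_lim hb
  have h2 : Tendsto (fun n : ℕ => C f / n) atTop (𝓝 0) :=
    tendsto_const_div_atTop_nhds_zero_nat (C f)
  have h3 := h1.sub h2
  rw [sub_zero] at h3
  have h4 : (fun n : ℕ => (u f x n + C f) / n - C f / n) = fun n : ℕ => u f x n / n := by
    funext n; ring
  rw [h4] at h3
  have hN : N f x = h.lim := by unfold N Subadditive.lim; rfl
  rw [hN]; exact h3

lemma N_eq_of_tendsto {x : Fin m → ℝ} {l : ℝ}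
    (h : Tendsto (fun n : ℕ => u f x n / n) atTop (𝓝 l)) : N f x = l :=
  tendsto_nhds_unique (tendsto_N f hpos hsub hhom x) h

lemma N_nonneg (x : Fin m → ℝ) : 0 ≤ N f x := by
  refine ge_of_tendsto (tendsto_N f hpos hsub hhom x) ?_
  filter_upwards with n
  have := u_nonneg f hpos hsub hhom x n
  positivity

/-- N on lattice points is f. -/
lemma N_lattice (a : Fin m → ℤ) : N f (fun i => (a i : ℝ)) = f a := by
  refine N_eq_of_tendsto f hpos hsub hhom ?_
  have key : ∀ n : ℕ, 1 ≤ n → u f (fun i => (a i : ℝ)) n / n = f a := by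
    intro n hn
    have h1 : (fun i => ⌊(n : ℝ) * (a i : ℝ)⌋) = (n : ℤ) • a := by
      funext i
      rw [show ((n : ℝ) * (a i : ℝ)) = (((n : ℤ) * a i : ℤ) : ℝ) by push_cast; ring,
        Int.floor_intCast]
      rfl
    rw [u, h1, hhom]
    have hn' : (0:ℝ) < n := by exact_mod_cast hn
    rw [abs_of_nonneg (by positivity : (0:ℝ) ≤ ((n:ℤ):ℝ))]
    push_cast
    field_simp
  rw [show (𝓝 (f a)) = 𝓝 (f a) from rfl]
  refine Tendsto.congr' ?_ tendsto_const_nhds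
  filter_upwards [eventually_ge_atTop 1] with n hn
  exact (key n hn).symm

lemma N_zero : N f 0 = 0 := by
  have := N_lattice f hpos hsub hhom 0
  rw [f0 f hhom] at this
  rw [show (0 : Fin m → ℝ) = fun i => ((0 : Fin m → ℤ) i : ℝ) by funext i; simp]
  exact this

/-- Lipschitz estimate for N w.r.t. ℓ¹. -/
lemma N_lip (x y : Fin m → ℝ) : N f x ≤ N f y + C f * ∑ i, |x i - y i| := by
  have hC := C_nonneg f hpos hsub hhom
  have key : ∀ n : ℕ, 1 ≤ n →
      u f x n / n ≤ u f y n / n + C f * ∑ i, |x i - y i| + C f * m / n := by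
    intro n hn
    have hn' : (0:ℝ) < n := by exact_mod_cast hn
    have h1 : u f x n ≤ u f y n + C f * (n * ∑ i, |x i - y i|) + C f * m := by
      have h2 := f_lipschitz f hpos hsub hhom
        (fun i => ⌊(n : ℝ) * x i⌋) (fun i => ⌊(n : ℝ) * y i⌋)
      have h3 : ∑ i, |((⌊(n : ℝ) * x i⌋ : ℤ) : ℝ) - ((⌊(n : ℝ) * y i⌋ : ℤ) : ℝ)|
          ≤ (n * ∑ i, |x i - y i|) + m := by
        rw [Finset.mul_sum]
        have h4 : (m : ℝ) = ∑ _i : Fin m, (1 : ℝ) := by simp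
        rw [h4, ← Finset.sum_add_distrib]
        refine Finset.sum_le_sum fun i _ => ?_
        calc |((⌊(n : ℝ) * x i⌋ : ℤ) : ℝ) - ((⌊(n : ℝ) * y i⌋ : ℤ) : ℝ)|
            ≤ |(n : ℝ) * x i - (n : ℝ) * y i| + 1 :=
              floor_diff_abs ((n : ℝ) * x i) ((n : ℝ) * y i)
          _ = (n : ℝ) * |x i - y i| + 1 := by
              rw [← mul_sub, abs_mul, abs_of_nonneg hn'.le]
      have h5 := mul_le_mul_of_nonneg_left h3 hC
      calc u f x n ≤ u f y n + C f * ∑ i, |((⌊(n : ℝ) * x i⌋ : ℤ) : ℝ) -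
            ((⌊(n : ℝ) * y i⌋ : ℤ) : ℝ)| := h2
        _ ≤ u f y n + C f * (n * ∑ i, |x i - y i|) + C f * m := by
            rw [mul_add] at h5; linarith
    calc u f x n / n ≤ (u f y n + C f * (n * ∑ i, |x i - y i|) + C f * m) / n := by
          gcongr
      _ = u f y n / n + C f * ∑ i, |x i - y i| + C f * m / n := by
          field_simp
  have hx := tendsto_N f hpos hsub hhom x
  have hy := tendsto_N f hpos hsub hhom y
  have h0 : Tendsto (fun n : ℕ => C f * m / n) atTop (𝓝 0) :=
    tendsto_const_div_atTop_nhds_zero_nat _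
  have hy' : Tendsto (fun n : ℕ => u f y n / n + C f * ∑ i, |x i - y i| + C f * m / n)
      atTop (𝓝 (N f y + C f * ∑ i, |x i - y i| + 0)) :=
    (hy.add tendsto_const_nhds).add h0
  rw [add_zero] at hy'
  refine le_of_tendsto_of_tendsto hx hy' ?_
  filter_upwards [eventually_ge_atTop 1] with n hn using key n hn

/-- N(p • x) = p * N(x) for natural p. -/
lemma N_nat (p : ℕ) (x : Fin m → ℝ) : N f ((p : ℝ) • x) = (p : ℝ) * N f x := by
  rcases Nat.eq_zero_or_pos p with rfl | hp
  · simp [N_zero f hpos hsub hhom]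
  refine N_eq_of_tendsto f hpos hsub hhom ?_
  have h1 : ∀ n : ℕ, u f ((p : ℝ) • x) n = u f x (n * p) := by
    intro n
    rw [u, u]
    congr 1
    funext i
    rw [Pi.smul_apply, smul_eq_mul]
    congr 1
    push_cast
    ring
  have h2 : Tendsto (fun n : ℕ => u f x (n * p) / ((n * p : ℕ) : ℝ)) atTop (𝓝 (N f x)) := by
    refine (tendsto_N f hpos hsub hhom x).comp ?_
    exact tendsto_atTop_mono (fun n => Nat.le_mul_of_pos_right n hp) tendsto_id
  have h3 := h2.const_mul ((p : ℝ))
  refine h3.congr' ?_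
  filter_upwards [eventually_ge_atTop 1] with n hn
  have hn' : (0:ℝ) < n := by exact_mod_cast hn
  have hp' : (0:ℝ) < p := by exact_mod_cast hp
  rw [h1]
  push_cast
  field_simp

/-- N(-x) = N(x). -/
lemma N_neg (x : Fin m → ℝ) : N f (-x) = N f x := by
  have hC := C_nonneg f hpos hsub hhom
  have key : ∀ y : Fin m → ℝ, ∀ n : ℕ, u f (-y) n ≤ u f y n + C f := by
    intro y n
    have hD : ∀ i, |⌊(n : ℝ) * (-y) i⌋ + ⌊(n : ℝ) * y i⌋| ≤ 1 := by
      intro i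
      have e1 : (n : ℝ) * (-y) i = -((n : ℝ) * y i) := by
        rw [Pi.neg_apply]; ring
      rw [e1]
      have h1 := Int.floor_le ((n : ℝ) * y i)
      have h2 := Int.lt_floor_add_one ((n : ℝ) * y i)
      have h3 := Int.floor_le (-((n : ℝ) * y i))
      have h4 := Int.lt_floor_add_one (-((n : ℝ) * y i))
      rw [abs_le]
      constructor
      · have h5 : (-2 : ℝ) < ((⌊-((n : ℝ) * y i)⌋ + ⌊(n : ℝ) * y i⌋ : ℤ) : ℝ) := by
          push_cast; linarith
        have h6 : (-2 : ℤ) < ⌊-((n : ℝ) * y i)⌋ + ⌊(n : ℝ) * y i⌋ := by exact_mod_cast h5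
        omega
      · have : ((⌊-((n : ℝ) * y i)⌋ + ⌊(n : ℝ) * y i⌋ : ℤ) : ℝ) ≤ 1 := by push_cast; linarith
        exact_mod_cast this
    have hsplit : (fun i => ⌊(n : ℝ) * (-y) i⌋) =
        (-(fun i => ⌊(n : ℝ) * y i⌋)) + (fun i => ⌊(n : ℝ) * (-y) i⌋ + ⌊(n : ℝ) * y i⌋) := by
      funext i
      simp only [Pi.add_apply, Pi.neg_apply]
      ring
    calc u f (-y) n = f ((-(fun i => ⌊(n : ℝ) * y i⌋)) +
          (fun i => ⌊(n : ℝ) * (-y) i⌋ + ⌊(n : ℝ) * y i⌋)) := by rw [u, ← hsplit]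
      _ ≤ f (-(fun i => ⌊(n : ℝ) * y i⌋)) + f (fun i => ⌊(n : ℝ) * (-y) i⌋ + ⌊(n : ℝ) * y i⌋) :=
          hsub _ _
      _ ≤ u f y n + C f := by
          rw [fneg f hhom]
          exact add_le_add le_rfl (f_small f hpos hsub hhom _ hD)
  have half : ∀ y : Fin m → ℝ, N f (-y) ≤ N f y := by
    intro y
    have h0 : Tendsto (fun n : ℕ => C f / n) atTop (𝓝 0) :=
      tendsto_const_div_atTop_nhds_zero_nat _
    have hy' : Tendsto (fun n : ℕ => u f y n / n + C f / n) atTop (𝓝 (N f y + 0)) :=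
      (tendsto_N f hpos hsub hhom y).add h0
    rw [add_zero] at hy'
    refine le_of_tendsto_of_tendsto (tendsto_N f hpos hsub hhom (-y)) hy' ?_
    filter_upwards [eventually_ge_atTop 1] with n hn
    have hn' : (0:ℝ) < n := by exact_mod_cast hn
    have := key y n
    rw [← add_div]
    gcongr
  refine le_antisymm (half x) ?_
  have := half (-x)
  rwa [neg_neg] at this

/-- N(g • x) = |g| * N(x) for integer g. -/
lemma N_int (g : ℤ) (x : Fin m → ℝ) : N f ((g : ℝ) • x) = |(g : ℝ)| * N f x := by
  rcases le_or_gt 0 g with hg | hg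
  · obtain ⟨p, rfl⟩ := Int.eq_ofNat_of_zero_le hg
    push_cast
    rw [abs_of_nonneg (by positivity : (0:ℝ) ≤ (p:ℝ))]
    exact N_nat f hpos hsub hhom p x
  · obtain ⟨p, rfl⟩ : ∃ p : ℕ, g = -(p : ℤ) := ⟨g.natAbs, by omega⟩
    push_cast
    have e1 : (-(p:ℝ)) • x = -((p : ℝ) • x) := by rw [neg_smul]
    rw [e1, N_neg f hpos hsub hhom, abs_neg,
      abs_of_nonneg (by positivity : (0:ℝ) ≤ (p:ℝ))]
    exact N_nat f hpos hsub hhom p x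

/-- N(r • x) = |r| * N(x) for rational r. -/
lemma N_rat (r : ℚ) (x : Fin m → ℝ) : N f ((r : ℝ) • x) = |(r : ℝ)| * N f x := by
  have hden : (0:ℝ) < (r.den : ℝ) := by exact_mod_cast r.pos
  set y : Fin m → ℝ := ((r.den : ℝ))⁻¹ • x with hy
  have hxy : ((r.den : ℝ)) • y = x := by
    rw [hy, smul_smul, mul_inv_cancel₀ hden.ne', one_smul]
  have hNy : N f y = N f x / r.den := by
    have := N_nat f hpos hsub hhom r.den y
    rw [hxy] at this
    field_simp [this]
    rw [this]; ring
  have e1 : (r : ℝ) • x = ((r.num : ℝ)) • y := by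
    rw [hy, smul_smul, Rat.cast_def, div_eq_mul_inv]
  rw [e1, N_int f hpos hsub hhom r.num y, hNy, Rat.cast_def, abs_div,
    abs_of_nonneg hden.le]
  push_cast
  field_simp

/-- Full real homogeneity. -/
lemma N_real (r : ℝ) (x : Fin m → ℝ) : N f (r • x) = |r| * N f x := by
  have hC := C_nonneg f hpos hsub hhom
  set S : ℝ := ∑ i, |x i| with hS
  have hS0 : 0 ≤ S := Finset.sum_nonneg fun i _ => abs_nonneg _
  have lip : ∀ a b : ℝ, N f (a • x) ≤ N f (b • x) + (C f * S) * |a - b| := by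
    intro a b
    refine (N_lip f hpos hsub hhom (a • x) (b • x)).trans ?_
    have : ∑ i, |(a • x) i - (b • x) i| = |a - b| * S := by
      rw [hS, Finset.mul_sum]
      refine Finset.sum_congr rfl fun i _ => ?_
      rw [Pi.smul_apply, Pi.smul_apply, smul_eq_mul, smul_eq_mul, ← sub_mul, abs_mul]
    rw [this]; ring_nf; rfl
  have cont1 : Continuous fun r : ℝ => N f (r • x) := by
    refine (LipschitzWith.of_dist_le_mul (K := (C f * S).toNNReal) fun a b => ?_).continuous
    rw [Real.dist_eq, Real.dist_eq, Real.coe_toNNReal _ (by positivity)]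
    rw [abs_sub_le_iff]
    constructor
    · have := lip a b; linarith [abs_nonneg (a - b)]
    · have := lip b a; rw [abs_sub_comm]; linarith
  have cont2 : Continuous fun r : ℝ => |r| * N f x :=
    continuous_abs.mul continuous_const
  have heq : (fun r : ℝ => N f (r • x)) = fun r : ℝ => |r| * N f x := by
    refine cont1.ext_on Rat.denseRange_cast cont2 ?_
    rintro _ ⟨q, rfl⟩
    exact N_rat f hpos hsub hhom q x
  exact congrFun heq r

/-- Subadditivity of N. -/
lemma N_subadd (x y : Fin m → ℝ) : N f (x + y) ≤ N f x + N f y := by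
  have hC := C_nonneg f hpos hsub hhom
  have key : ∀ n : ℕ, u f (x + y) n ≤ u f x n + u f y n + C f := by
    intro n
    set A : Fin m → ℤ := fun i => ⌊(n : ℝ) * x i⌋ with hA
    set B : Fin m → ℤ := fun i => ⌊(n : ℝ) * y i⌋ with hB
    set E : Fin m → ℤ := fun i => ⌊(n : ℝ) * (x + y) i⌋ with hE
    have hDle : ∀ i, |E i - A i - B i| ≤ 1 := by
      intro i
      have e0 : (n : ℝ) * (x + y) i = (n : ℝ) * x i + (n : ℝ) * y i := by
        rw [Pi.add_apply]; ring
      have h1 : A i + B i ≤ E i := by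
        rw [hA, hB, hE]
        simp only [Int.le_floor, e0]
        push_cast
        have := Int.floor_le ((n : ℝ) * x i)
        have := Int.floor_le ((n : ℝ) * y i)
        linarith
      have h3 : E i < A i + B i + 2 := by
        rw [hA, hB, hE]
        simp only [Int.floor_lt, e0]
        push_cast
        have := Int.lt_floor_add_one ((n : ℝ) * x i)
        have := Int.lt_floor_add_one ((n : ℝ) * y i)
        linarith
      rw [abs_le]; omega
    have hsplit : (fun i => E i) = A + (B + (fun i => E i - A i - B i)) := by
      funext i
      simp only [Pi.add_apply]
      ring
    calc u f (x + y) n = f (A + (B + (fun i => E i - A i - B i))) := by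
          rw [u, ← hsplit]
      _ ≤ f A + (f B + f (fun i => E i - A i - B i)) :=
          le_trans (hsub _ _) (add_le_add le_rfl (hsub _ _))
      _ ≤ u f x n + u f y n + C f := by
          have := f_small f hpos hsub hhom (fun i => E i - A i - B i) hDle
          rw [u, u]; linarith
  have h0 : Tendsto (fun n : ℕ => C f / n) atTop (𝓝 0) :=
    tendsto_const_div_atTop_nhds_zero_nat _
  have hy' : Tendsto (fun n : ℕ => u f x n / n + u f y n / n + C f / n)
      atTop (𝓝 (N f x + N f y + 0)) :=
    ((tendsto_N f hpos hsub hhom x).add (tendsto_N f hpos hsub hhom y)).add h0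
  rw [add_zero] at hy'
  refine le_of_tendsto_of_tendsto (tendsto_N f hpos hsub hhom (x + y)) hy' ?_
  filter_upwards [eventually_ge_atTop 1] with n hn
  have hn' : (0:ℝ) < n := by exact_mod_cast hn
  have := key n
  rw [← add_div, ← add_div]
  gcongr

/-- Positivity of N from discreteness. -/
lemma N_pos (c : ℝ) (hc : 0 < c) (hdisc : ∀ a, a ≠ 0 → c ≤ f a)
    (x : Fin m → ℝ) (hx : x ≠ 0) : 0 < N f x := by
  have hC := C_nonneg f hpos hsub hhom
  rcases (N_nonneg f hpos hsub hhom x).lt_or_eq with h | h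
  · exact h
  exfalso
  have h0 : N f x = 0 := h.symm
  obtain ⟨j, hj⟩ := Function.ne_iff.mp hx
  have hj : x j ≠ 0 := by simpa using hj
  have hxj : 0 < |x j| := abs_pos.2 hj
  obtain ⟨K₁, hK₁⟩ := exists_nat_gt (C f * m / c)
  obtain ⟨K₂, hK₂⟩ := exists_nat_gt (1 / |x j|)
  set K : ℕ := K₁ + K₂ + 1 with hKdef
  have hK0 : 0 < K := by omega
  have hK0' : (0:ℝ) < K := by exact_mod_cast hK0
  have hK1 : C f * m / c < K := by
    refine hK₁.trans_le ?_
    exact_mod_cast Nat.le_add_right K₁ (K₂ + 1) |>.trans (by omega)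
  have hK2 : 1 / |x j| < K := by
    refine hK₂.trans_le ?_
    have : K₂ ≤ K := by omega
    exact_mod_cast this
  -- pigeonhole
  set φ : ℕ → (Fin m → ℤ) := fun n => fun i => ⌊(K : ℝ) * Int.fract ((n : ℝ) * x i)⌋ with hφ
  have hmaps : ∀ n ∈ Finset.range (K ^ m + 1), φ n ∈
      Finset.Icc (0 : Fin m → ℤ) (fun _ => (K : ℤ) - 1) := by
    intro n _
    rw [Finset.mem_Icc]
    constructor
    · intro i
      simp only [Pi.zero_apply, hφ]
      refine Int.le_floor.2 ?_
      push_cast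
      exact mul_nonneg (by positivity) (Int.fract_nonneg _)
    · intro i
      simp only [hφ]
      have : ⌊(K : ℝ) * Int.fract ((n : ℝ) * x i)⌋ < K := by
        rw [Int.floor_lt]
        push_cast
        nlinarith [Int.fract_lt_one ((n : ℝ) * x i), Int.fract_nonneg ((n : ℝ) * x i)]
      omega
  have hcard : (Finset.Icc (0 : Fin m → ℤ) (fun _ => (K : ℤ) - 1)).card < 
      (Finset.range (K ^ m + 1)).card := by
    rw [Finset.card_range, Pi.card_Icc]
    have : ∀ i : Fin m, (Finset.Icc ((0 : Fin m → ℤ) i) ((K : ℤ) - 1)).card = K := by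
      intro i
      rw [Pi.zero_apply, Int.card_Icc]
      omega
    rw [Finset.prod_congr rfl fun i _ => this i, Finset.prod_const, Finset.card_univ,
      Fintype.card_fin]
    omega
  obtain ⟨n₁, hn₁, n₂, hn₂, hne, hφeq⟩ :=
    Finset.exists_ne_map_eq_of_card_lt_of_maps_to hcard hmaps
  -- main contradiction for ordered pair
  have main : ∀ n₁ n₂ : ℕ, n₁ < n₂ → φ n₁ = φ n₂ → False := by
    intro n₁ n₂ hlt hfe
    set p : ℕ := n₂ - n₁ with hp
    have hp1 : 1 ≤ p := by omega
    have hpr : (p : ℝ) = (n₂ : ℝ) - (n₁ : ℝ) := by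
      rw [hp]; push_cast [Nat.cast_sub hlt.le]; ring
    set a : Fin m → ℤ := fun i => ⌊(n₂ : ℝ) * x i⌋ - ⌊(n₁ : ℝ) * x i⌋ with ha
    have key : ∀ i, |(a i : ℝ) - (p : ℝ) * x i| < 1 / K := by
      intro i
      have hfi : ⌊(K : ℝ) * Int.fract ((n₁ : ℝ) * x i)⌋ =
          ⌊(K : ℝ) * Int.fract ((n₂ : ℝ) * x i)⌋ := congrFun hfe i
      have b1 := Int.floor_le ((K : ℝ) * Int.fract ((n₁ : ℝ) * x i))
      have b2 := Int.lt_floor_add_one ((K : ℝ) * Int.fract ((n₁ : ℝ) * x i))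
      have b3 := Int.floor_le ((K : ℝ) * Int.fract ((n₂ : ℝ) * x i))
      have b4 := Int.lt_floor_add_one ((K : ℝ) * Int.fract ((n₂ : ℝ) * x i))
      rw [hfi] at b1 b2
      have hKK : (K:ℝ) * (1 / K) = 1 := by field_simp
      have hfr : |Int.fract ((n₁ : ℝ) * x i) - Int.fract ((n₂ : ℝ) * x i)| < 1 / K := by
        rw [abs_lt]
        constructor <;> nlinarith
      have e2 : (a i : ℝ) - (p : ℝ) * x i =
          Int.fract ((n₁ : ℝ) * x i) - Int.fract ((n₂ : ℝ) * x i) := by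
        rw [ha, hpr, Int.fract, Int.fract]
        push_cast
        ring
      rw [e2]
      exact hfr
    have ha0 : a ≠ 0 := by
      intro ha0
      have := key j
      rw [ha0] at this
      simp only [Pi.zero_apply, Int.cast_zero, zero_sub, abs_neg, abs_mul] at this
      have hpabs : (1:ℝ) ≤ |(p : ℝ)| := by
        rw [abs_of_nonneg (by positivity)]
        exact_mod_cast hp1
      have h1K : 1 / (K:ℝ) < |x j| := by
        rw [div_lt_iff₀ hK0']
        rw [div_lt_iff₀ hxj] at hK2
        linarith [mul_comm |x j| (K:ℝ)]
      nlinarith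
    -- now bound f a
    have hfa : f a < c := by
      have hl := N_lip f hpos hsub hhom (fun i => (a i : ℝ)) ((p : ℝ) • x)
      rw [N_lattice f hpos hsub hhom a, N_nat f hpos hsub hhom p x, h0, mul_zero,
        zero_add] at hl
      have hsum : ∑ i, |(fun i => (a i : ℝ)) i - ((p : ℝ) • x) i| ≤ m * (1 / K) := by
        have : (m : ℝ) * (1 / K) = ∑ _i : Fin m, (1 / (K:ℝ)) := by
          rw [Finset.sum_const, Finset.card_univ, Fintype.card_fin, nsmul_eq_mul]
        rw [this]
        refine Finset.sum_le_sum fun i _ => ?_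
        simp only [Pi.smul_apply, smul_eq_mul]
        exact (key i).le
      have hfin : C f * (m * (1 / K)) < c := by
        rw [div_lt_iff₀ hc] at hK1
        have : C f * ((m:ℝ) * (1 / K)) = C f * m / K := by ring
        rw [this, div_lt_iff₀ hK0']
        linarith
      calc f a ≤ C f * ∑ i, |(fun i => (a i : ℝ)) i - ((p : ℝ) • x) i| := hl
        _ ≤ C f * (m * (1 / K)) := by gcongr
        _ < c := hfin
    exact absurd (hdisc a ha0) (not_le.2 hfa)
  rcases hne.lt_or_gt with hlt | hlt
  · exact main n₁ n₂ hlt hφeq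
  · exact main n₂ n₁ hlt hφeq.symm

/-- N vanishes exactly at 0. -/
lemma N_zero_iff (c : ℝ) (hc : 0 < c) (hdisc : ∀ a, a ≠ 0 → c ≤ f a)
    (x : Fin m → ℝ) : N f x = 0 ↔ x = 0 := by
  constructor
  · intro h
    by_contra hx
    exact (N_pos f hpos hsub hhom c hc hdisc x hx).ne' h
  · rintro rfl
    exact N_zero f hpos hsub hhom

/-- Continuity of N. -/
lemma N_continuous : Continuous (N f) := by
  have hC := C_nonneg f hpos hsub hhom
  refine (LipschitzWith.of_dist_le_mul (K := (C f * m).toNNReal) fun x y => ?_).continuous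
  rw [Real.dist_eq, Real.coe_toNNReal _ (by positivity)]
  have hsum : ∀ x y : Fin m → ℝ, ∑ i, |x i - y i| ≤ m * dist x y := by
    intro x y
    have : (m : ℝ) * dist x y = ∑ _i : Fin m, dist x y := by
      rw [Finset.sum_const, Finset.card_univ, Fintype.card_fin, nsmul_eq_mul]
    rw [this]
    refine Finset.sum_le_sum fun i _ => ?_
    rw [← Real.dist_eq]
    exact dist_le_pi_dist x y i
  rw [abs_sub_le_iff]
  constructor
  · have := N_lip f hpos hsub hhom x y
    have h2 := mul_le_mul_of_nonneg_left (hsum x y) hC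
    nlinarith [dist_nonneg (x := x) (y := y)]
  · have := N_lip f hpos hsub hhom y x
    have h2 := mul_le_mul_of_nonneg_left (hsum y x) hC
    rw [dist_comm] at h2
    nlinarith [dist_nonneg (x := x) (y := y)]

end hyps

end DZN


/-- A discrete `ℤ`-norm on `ℤᵐ` extends to an `ℝ`-norm on `ℝᵐ`, and is hence
bounded below by a positive multiple of the `ℓ¹` norm. -/
theorem discrete_znorm_extends_and_l1_bound
    {m : ℕ} (f : (Fin m → ℤ) → ℝ)
    (hpos : ∀ a, 0 ≤ f a)
    (hsub : ∀ a b, f (a + b) ≤ f a + f b)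
    (hhom : ∀ (n : ℤ) (a), f (n • a) = |(n : ℝ)| * f a)
    (hzero : ∀ a, f a = 0 ↔ a = 0)
    (c : ℝ) (hc : 0 < c) (hdisc : ∀ a, a ≠ 0 → c ≤ f a) :
    (∃ N : (Fin m → ℝ) → ℝ,
      (∀ x y, N (x + y) ≤ N x + N y) ∧
      (∀ (r : ℝ) (x), N (r • x) = |r| * N x) ∧
      (∀ x, N x = 0 ↔ x = 0) ∧
      (∀ a : Fin m → ℤ, N (fun i => (a i : ℝ)) = f a)) ∧
    ∃ k : ℝ, 0 < k ∧ ∀ a : Fin m → ℤ, k * (∑ i, |(a i : ℝ)|) ≤ f a := by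
  refine ⟨⟨DZN.N f, DZN.N_subadd f hpos hsub hhom,
    fun r x => DZN.N_real f hpos hsub hhom r x,
    fun x => DZN.N_zero_iff f hpos hsub hhom c hc hdisc x,
    fun a => DZN.N_lattice f hpos hsub hhom a⟩, ?_⟩
  rcases Nat.eq_zero_or_pos m with rfl | hm
  · exact ⟨1, one_pos, fun a => by simpa using hpos a⟩
  set S : Set (Fin m → ℝ) := {x | ∑ i, |x i| = 1} with hS
  have hclosed : IsClosed S :=
    isClosed_eq (continuous_finset_sum _ fun i _ => (continuous_apply i).abs)
      continuous_const
  have hsubset : S ⊆ Metric.closedBall (0 : Fin m → ℝ) 1 := by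
    intro x hxS
    rw [Metric.mem_closedBall]
    rw [dist_pi_le_iff zero_le_one]
    intro i
    rw [Real.dist_eq, Pi.zero_apply, sub_zero]
    calc |x i| ≤ ∑ j, |x j| :=
          Finset.single_le_sum (f := fun j => |x j|) (fun j _ => abs_nonneg _)
            (Finset.mem_univ i)
      _ = 1 := hxS
  have hcomp : IsCompact S :=
    (isCompact_closedBall (0 : Fin m → ℝ) 1).of_isClosed_subset hclosed hsubset
  have hne : S.Nonempty := by
    refine ⟨Pi.single ⟨0, hm⟩ 1, ?_⟩
    show ∑ j, |Pi.single (⟨0, hm⟩ : Fin m) (1:ℝ) j| = 1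
    simp [Pi.single_apply, apply_ite abs, Finset.sum_ite_eq]
  obtain ⟨x₀, hx₀S, hmin'⟩ := hcomp.exists_isMinOn hne
    ((DZN.N_continuous f hpos hsub hhom).continuousOn)
  have hmin : ∀ y ∈ S, DZN.N f x₀ ≤ DZN.N f y := fun y hy => hmin' hy
  have hx₀ne : x₀ ≠ 0 := by
    intro h
    have : ∑ i, |x₀ i| = 1 := hx₀S
    rw [h] at this
    simp at this
  have hk : 0 < DZN.N f x₀ := DZN.N_pos f hpos hsub hhom c hc hdisc x₀ hx₀ne
  refine ⟨DZN.N f x₀, hk, fun a => ?_⟩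
  by_cases ha : a = 0
  · subst ha
    have h1 : f 0 = 0 := DZN.f0 f hhom
    simp [h1]
  · set s : ℝ := ∑ i, |(a i : ℝ)| with hs
    have hspos : 0 < s := by
      obtain ⟨i, hi⟩ := Function.ne_iff.mp ha
      have hi' : a i ≠ 0 := by simpa using hi
      refine Finset.sum_pos' (fun j _ => abs_nonneg _) ⟨i, Finset.mem_univ i, ?_⟩
      have : (a i : ℝ) ≠ 0 := by exact_mod_cast hi'
      exact abs_pos.2 this
    set x : Fin m → ℝ := s⁻¹ • (fun i => (a i : ℝ)) with hx
    have hxS : x ∈ S := by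
      show ∑ i, |x i| = 1
      have : ∀ i, |x i| = s⁻¹ * |(a i : ℝ)| := by
        intro i
        rw [hx, Pi.smul_apply, smul_eq_mul, abs_mul, abs_of_nonneg (by positivity)]
      rw [Finset.sum_congr rfl fun i _ => this i, ← Finset.mul_sum, ← hs,
        inv_mul_cancel₀ hspos.ne']
    have h1 : f a = s * DZN.N f x := by
      rw [← DZN.N_lattice f hpos hsub hhom a]
      have e : (fun i => (a i : ℝ)) = s • x := by
        rw [hx, smul_smul, mul_inv_cancel₀ hspos.ne', one_smul]
      rw [e, DZN.N_real f hpos hsub hhom s x, abs_of_pos hspos]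
    rw [h1]
    have h2 := hmin x hxS
    nlinarith
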